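/- Under the assumptions of the previous statement (entries of D^{(n)} bounded by θ and empirical measures of the D^{(n)}(u) converging weakly to P), for every h ≥ 2 the number |G(D^{(n)}, h)| of directed colored multigraphs on [n] with degree sequence D^{(n)} whose colorblind multigraph has no cycle of length ≤ h satisfies |G(D^{(n)}, h)| ~ α_h · ( ∏_{c∈C_<} S_c^{(n)}! · ∏_{c∈C_=} (S_c^{(n)} − 1)!! ) / ( ∏_{c∈C} ∏_{u=1}^n D_c^{(n)}(u)! ) as n → ∞, where S_c^{(n)} = ∑_{u=1}^n D_c^{(n)}(u) and α_h > 0 is the limit probability that the configuration model produces no cycle of length ≤ h. -/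

import Mathlib

open Finset

/-! Generalized configuration model with colors `C = Fin L × Fin L`, conjugate
`c̄ = c.swap`, diagonal colors `C_=` (with `c.1 = c.2`) and colors `C_<`
(with `c.1 < c.2`). -/

/-- Half-edges of color `c`: `W_c = {(i,j) : i ∈ [n], 1 ≤ j ≤ D_c(i)}`. -/
abbrev CW (L n : ℕ) (D : Fin n → Fin L × Fin L → ℕ) (c : Fin L × Fin L) : Type :=
  Σ i : Fin n, Fin (D i c)

/-- Underlying data of a configuration: for each diagonal color a permutation of `W_c`,
and for each color `c ∈ C_<` a bijection `W_c ≃ W_{c̄}`. -/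
abbrev ConfigCarrier (L n : ℕ) (D : Fin n → Fin L × Fin L → ℕ) : Type :=
  (∀ k : Fin L, Equiv.Perm (CW L n D (k, k))) ×
    (∀ c : Fin L × Fin L, c.1 < c.2 → (CW L n D c ≃ CW L n D c.swap))

/-- A configuration: the diagonal components are perfect matchings
(fixed-point-free involutions). -/
abbrev Config (L n : ℕ) (D : Fin n → Fin L × Fin L → ℕ) : Type :=
  {σ : ConfigCarrier L n D // ∀ (k : Fin L) (x : CW L n D (k, k)),
      σ.1 k (σ.1 k x) = x ∧ σ.1 k x ≠ x}

/-- The directed colored multigraph `Γ(σ)` produced by a configuration `σ`: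
`Γ(σ)_c(i,j)` counts half-edges of color `c` at `i` matched to half-edges at `j`. -/
noncomputable def Gamma (L n : ℕ) (D : Fin n → Fin L × Fin L → ℕ) (σ : Config L n D)
    (c : Fin L × Fin L) (i j : Fin n) : ℕ :=
  if heq : c.1 = c.2 then
    Nat.card {x : CW L n D (c.1, c.1) // x.1 = i ∧ (σ.1.1 c.1 x).1 = j}
  else if hlt : c.1 < c.2 then
    Nat.card {x : CW L n D c // x.1 = i ∧ (σ.1.2 c hlt x).1 = j}
  else
    Nat.card {x : CW L n D c.swap // x.1 = j ∧
      (σ.1.2 c.swap (lt_of_le_of_ne (not_lt.mp hlt) (Ne.symm heq)) x).1 = i}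

/-- Colorblind multigraph: `ω̄(u,v) = ∑_c ω_c(u,v)`. -/
def colorBlind (L n : ℕ) (w : Fin L × Fin L → Fin n → Fin n → ℕ) (u v : Fin n) : ℕ :=
  ∑ c : Fin L × Fin L, w c u v

/-- The (colorblind) multigraph `w` has a cycle of length `ℓ`: a loop for `ℓ = 1`,
a multiple edge for `ℓ = 2`, and `ℓ` distinct consecutively joined vertices for `ℓ ≥ 3`. -/
def HasCycleLen (n : ℕ) (w : Fin n → Fin n → ℕ) (ℓ : ℕ) : Prop :=
  if ℓ = 1 then ∃ v : Fin n, 2 ≤ w v v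
  else if ℓ = 2 then ∃ u v : Fin n, u ≠ v ∧ 2 ≤ w u v
  else 3 ≤ ℓ ∧ ∃ f : Fin ℓ → Fin n, Function.Injective f ∧
    ∀ i : Fin ℓ, 1 ≤ w (f i) (f ⟨(i.1 + 1) % ℓ, Nat.mod_lt _ i.pos⟩)

/-- No cycle of length `≤ h`. -/
def NoShortCycle (n : ℕ) (w : Fin n → Fin n → ℕ) (h : ℕ) : Prop :=
  ∀ ℓ : ℕ, 1 ≤ ℓ → ℓ ≤ h → ¬ HasCycleLen n w ℓ

/-- `H` is a directed colored multigraph on `[n]` with degree sequence `D`. -/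
def IsMultigraph (L n : ℕ) (D : Fin n → Fin L × Fin L → ℕ)
    (H : Fin L × Fin L → Fin n → Fin n → ℕ) : Prop :=
  (∀ (k : Fin L) (i j : Fin n), H (k, k) i j = H (k, k) j i) ∧
  (∀ (k : Fin L) (i : Fin n), Even (H (k, k) i i)) ∧
  (∀ c : Fin L × Fin L, c.1 ≠ c.2 → ∀ i j : Fin n, H c i j = H c.swap j i) ∧
  (∀ (i : Fin n) (c : Fin L × Fin L), D i c = ∑ j, H c i j)



section Helpers

/-- Even cardinality from a fixed-point-free involution. -/
lemma even_card_of_fpf {β : Type*} [Fintype β] [DecidableEq β] (g : β → β)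
    (h1 : ∀ x, g (g x) = x) (h2 : ∀ x, g x ≠ x) : Even (Nat.card β) := by
  haveI : Fact (Nat.Prime 2) := ⟨Nat.prime_two⟩
  set f : Function.End β := g with hfdef
  have hf : f ^ 2 ^ 1 = 1 := by
    have : f ^ 2 ^ 1 = f * f := by norm_num [pow_succ, pow_one]
    rw [this]
    funext x
    show g (g x) = x
    exact h1 x
  have hmod := Equiv.Perm.card_fixedPoints_modEq (p := 2) (n := 1) hf
  have hempty : Fintype.card (Function.fixedPoints f) = 0 := by
    rw [Fintype.card_eq_zero_iff]
    exact ⟨fun x => h2 x.1 x.2⟩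
  rw [hempty] at hmod
  rw [Nat.card_eq_fintype_card, Nat.even_iff]
  exact hmod

lemma nat_card_sigma {ι : Type*} [Fintype ι] (f : ι → Type*) [∀ i, Finite (f i)] :
    Nat.card (Σ i, f i) = ∑ i, Nat.card (f i) := by
  letI := fun i => Fintype.ofFinite (f i)
  simp [Nat.card_eq_fintype_card, Fintype.card_sigma]

/-- Decompose the cardinality of a subtype along the fibers of a map. -/
lemma sum_card_fiber {γ : Type*} [Finite γ] {ι : Type*} [Fintype ι]
    (P : γ → Prop) (g : γ → ι) :
    ∑ j, Nat.card {x : γ // P x ∧ g x = j} = Nat.card {x : γ // P x} := by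
  have e : (Σ j : ι, {x : γ // P x ∧ g x = j}) ≃ {x : γ // P x} := by
    refine (Equiv.sigmaCongrRight fun j => ?_).trans (Equiv.sigmaFiberEquiv fun z : {x // P x} => g z.1)
    exact ((Equiv.subtypeSubtypeEquivSubtypeInter P (fun x => g x = j))).symm
  rw [← nat_card_sigma, Nat.card_congr e]

/-- Cardinality of the fiber of `Sigma.fst`. -/
def sigmaFstFiberEquiv {V : Type*} (d : V → ℕ) (i : V) :
    {x : Σ u : V, Fin (d u) // x.1 = i} ≃ Fin (d i) where
  toFun x := x.2 ▸ x.1.2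
  invFun y := ⟨⟨i, y⟩, rfl⟩
  left_inv := by rintro ⟨⟨u, x⟩, rfl⟩; rfl
  right_inv y := rfl

lemma card_sigmaFstFiber {V : Type*} [Fintype V] (d : V → ℕ) (i : V) :
    Nat.card {x : Σ u : V, Fin (d u) // x.1 = i} = d i := by
  rw [Nat.card_congr (sigmaFstFiberEquiv d i), Nat.card_eq_fintype_card, Fintype.card_fin]

end Helpers


section MatchCount

variable {α : Type*} [Fintype α] [DecidableEq α]

private def extPerm (a b : α) (g : Equiv.Perm {x : α // x ≠ a ∧ x ≠ b}) : Equiv.Perm α :=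
  Equiv.swap a b * Equiv.Perm.ofSubtype g

private lemma extPerm_apply_a (a b : α) (hb : b ≠ a)
    (g : Equiv.Perm {x : α // x ≠ a ∧ x ≠ b}) : extPerm a b g a = b := by
  have : Equiv.Perm.ofSubtype g a = a :=
    Equiv.Perm.ofSubtype_apply_of_not_mem g (by simp)
  simp [extPerm, Equiv.Perm.mul_apply, this]

private lemma extPerm_apply_b (a b : α) (hb : b ≠ a)
    (g : Equiv.Perm {x : α // x ≠ a ∧ x ≠ b}) : extPerm a b g b = a := by
  have : Equiv.Perm.ofSubtype g b = b :=
    Equiv.Perm.ofSubtype_apply_of_not_mem g (by simp)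
  simp [extPerm, Equiv.Perm.mul_apply, this]

private lemma extPerm_apply_other (a b : α)
    (g : Equiv.Perm {x : α // x ≠ a ∧ x ≠ b}) (x : α) (hx : x ≠ a ∧ x ≠ b) :
    extPerm a b g x = (g ⟨x, hx⟩).1 := by
  have h1 : Equiv.Perm.ofSubtype g x = (g ⟨x, hx⟩).1 :=
    Equiv.Perm.ofSubtype_apply_of_mem g hx
  have h2 := (g ⟨x, hx⟩).2
  simp [extPerm, Equiv.Perm.mul_apply, h1, Equiv.swap_apply_of_ne_of_ne h2.1 h2.2]

private lemma extPerm_matching (a b : α) (hb : b ≠ a)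
    (g : Equiv.Perm {x : α // x ≠ a ∧ x ≠ b}) (hg : ∀ y, g (g y) = y ∧ g y ≠ y) (x : α) :
    extPerm a b g (extPerm a b g x) = x ∧ extPerm a b g x ≠ x := by
  by_cases hxa : x = a
  · rw [hxa]
    rw [extPerm_apply_a a b hb g, extPerm_apply_b a b hb g]
    exact ⟨rfl, hb⟩
  · by_cases hxb : x = b
    · rw [hxb]
      rw [extPerm_apply_b a b hb g, extPerm_apply_a a b hb g]
      exact ⟨rfl, fun e => hb e.symm⟩
    · rw [extPerm_apply_other a b g x ⟨hxa, hxb⟩]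
      have h2 := (g ⟨x, ⟨hxa, hxb⟩⟩).2
      rw [extPerm_apply_other a b g _ h2]
      constructor
      · have := (hg ⟨x, ⟨hxa, hxb⟩⟩).1
        exact congrArg Subtype.val this
      · intro e
        exact (hg ⟨x, ⟨hxa, hxb⟩⟩).2 (Subtype.ext e)

theorem card_matchings : ∀ (N : ℕ), ∀ (α : Type) [Fintype α] [DecidableEq α],
    Fintype.card α = N → Even N →
    Nat.card {f : Equiv.Perm α // ∀ x, f (f x) = x ∧ f x ≠ x} = Nat.doubleFactorial (N - 1) := by
  intro N
  induction N using Nat.strong_induction_on with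
  | _ N ih =>
    intro α _ _ hcard heven
    rcases Nat.eq_zero_or_pos N with h0 | hpos
    · subst h0
      haveI : IsEmpty α := Fintype.card_eq_zero_iff.mp hcard
      haveI : Subsingleton {f : Equiv.Perm α // ∀ x, f (f x) = x ∧ f x ≠ x} :=
        ⟨fun f f' => Subtype.ext (Equiv.ext fun x => (IsEmpty.false x).elim)⟩
      haveI : Nonempty {f : Equiv.Perm α // ∀ x, f (f x) = x ∧ f x ≠ x} :=
        ⟨⟨1, fun x => (IsEmpty.false x).elim⟩⟩
      rw [Nat.card_unique]
      rfl
    · have hN2 : 2 ≤ N := by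
        rcases heven with ⟨t, rfl⟩; omega
      obtain ⟨a⟩ : Nonempty α := Fintype.card_pos_iff.mp (hcard ▸ hpos)
      set F : (Σ b : {b : α // b ≠ a},
          {g : Equiv.Perm {x : α // x ≠ a ∧ x ≠ b.1} // ∀ y, g (g y) = y ∧ g y ≠ y}) →
          {f : Equiv.Perm α // ∀ x, f (f x) = x ∧ f x ≠ x} :=
        fun p => ⟨extPerm a p.1.1 p.2.1, extPerm_matching a p.1.1 p.1.2 p.2.1 p.2.2⟩ with hF
      have hinj : Function.Injective F := by
        rintro ⟨⟨b, hb⟩, ⟨g, hg⟩⟩ ⟨⟨b', hb'⟩, ⟨g', hg'⟩⟩ hFF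
        have hval : extPerm a b g = extPerm a b' g' := congrArg Subtype.val hFF
        have hbb : b = b' := by
          have := congrArg (fun σ : Equiv.Perm α => σ a) hval
          simpa [extPerm_apply_a a b hb g, extPerm_apply_a a b' hb' g'] using this
        subst hbb
        have hgg : g = g' := by
          apply Equiv.ext
          rintro ⟨x, hx⟩
          apply Subtype.ext
          have h1 := extPerm_apply_other a b g x hx
          have h2 := extPerm_apply_other a b g' x hx
          rw [hval] at h1
          rw [h1] at h2
          exact h2
        subst hgg
        rfl
      have hsurj : Function.Surjective F := by
        rintro ⟨f, hf⟩
        have hiff : ∀ x, (x ≠ a ∧ x ≠ f a) ↔ (f x ≠ a ∧ f x ≠ f a) := by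
          intro x
          constructor
          · rintro ⟨h1, h2⟩
            refine ⟨fun e => h2 ?_, fun e => h1 (f.injective e)⟩
            rw [← e, (hf x).1]
          · rintro ⟨h1, h2⟩
            refine ⟨fun e => h2 ?_, fun e => h1 ?_⟩
            · rw [e]
            · rw [e, (hf a).1]
        refine ⟨⟨⟨f a, (hf a).2⟩, ⟨f.subtypePerm (fun x => (hiff x).symm), ?_⟩⟩, ?_⟩
        · rintro ⟨y, hy⟩
          constructor
          · apply Subtype.ext
            simpa [Equiv.Perm.subtypePerm_apply] using (hf y).1
          · intro e
            exact (hf y).2 (congrArg Subtype.val e)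
        · apply Subtype.ext
          apply Equiv.ext
          intro x
          show extPerm a (f a) _ x = f x
          by_cases hxa : x = a
          · rw [hxa]
            rw [extPerm_apply_a a (f a) (hf a).2]
          · by_cases hxb : x = f a
            · rw [hxb]
              rw [extPerm_apply_b a (f a) (hf a).2]
              exact ((hf a).1).symm
            · rw [extPerm_apply_other a (f a) _ x ⟨hxa, hxb⟩]
              rfl
      have hcardeq := Nat.card_eq_of_bijective F ⟨hinj, hsurj⟩
      rw [← hcardeq]
      have hfib : ∀ b : {b : α // b ≠ a},
          Nat.card {g : Equiv.Perm {x : α // x ≠ a ∧ x ≠ b.1} // ∀ y, g (g y) = y ∧ g y ≠ y}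
            = Nat.doubleFactorial (N - 2 - 1) := by
        rintro ⟨b, hb⟩
        have hcard2 : Fintype.card {x : α // x ≠ a ∧ x ≠ b} = N - 2 := by
          rw [Fintype.card_subtype]
          have hfil : univ.filter (fun x : α => x ≠ a ∧ x ≠ b) = univ \ {a, b} := by
            ext x; simp [not_or]
          rw [hfil, Finset.card_sdiff_of_subset (Finset.subset_univ _), Finset.card_univ, hcard]
          have : ({a, b} : Finset α).card = 2 := by
            rw [Finset.card_insert_of_notMem (by simpa using fun e => hb e.symm),
              Finset.card_singleton]
          rw [this]
        exact ih (N - 2) (by omega) _ hcard2 (by rcases heven with ⟨t, rfl⟩; exact ⟨t - 1, by omega⟩)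
      rw [nat_card_sigma]
      rw [Finset.sum_congr rfl (fun b _ => hfib b), Finset.sum_const, Finset.card_univ,
        smul_eq_mul]
      have hcb : Fintype.card {b : α // b ≠ a} = N - 1 := by
        rw [Fintype.card_subtype]
        have : univ.filter (fun b : α => b ≠ a) = univ \ {a} := by
          ext x; simp
        rw [this, Finset.card_sdiff_of_subset (Finset.subset_univ _), Finset.card_univ, hcard,
          Finset.card_singleton]
      rw [hcb]
      obtain ⟨m, rfl⟩ : ∃ m, N = m + 2 := ⟨N - 2, by omega⟩
      cases m with
      | zero => rfl
      | succ k =>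
        have e1 : k + 1 + 2 - 1 = k + 2 := by omega
        have e2 : k + 1 + 2 - 2 - 1 = k := by omega
        rw [e1, e2, Nat.doubleFactorial_add_two]
end MatchCount


section Counts

variable {V : Type*} [Fintype V] [DecidableEq V]

omit [Fintype V] [DecidableEq V] in
lemma card_nbr_fiber (H : V → ℕ) (hle : ∀ v, H v ≤ 1) (j : V) :
    Nat.card {w : {v : V // H v = 1} // w.1 = j} = H j := by
  rcases Nat.le_one_iff_eq_zero_or_eq_one.mp (hle j) with h0 | h1
  · rw [h0, Nat.card_eq_zero]
    left
    exact ⟨fun w => by have := w.1.2; rw [w.2] at this; omega⟩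
  · rw [h1]
    haveI : Nonempty {w : {v : V // H v = 1} // w.1 = j} := ⟨⟨⟨j, h1⟩, rfl⟩⟩
    haveI : Subsingleton {w : {v : V // H v = 1} // w.1 = j} :=
      ⟨fun w w' => Subtype.ext (Subtype.ext (w.2.trans w'.2.symm))⟩
    exact Nat.card_unique

lemma card_nbr (H : V → ℕ) (hle : ∀ v, H v ≤ 1) :
    Fintype.card {v : V // H v = 1} = ∑ v, H v := by
  rw [Fintype.card_subtype, Finset.card_filter]
  apply Finset.sum_congr rfl
  intro v _
  rcases Nat.le_one_iff_eq_zero_or_eq_one.mp (hle v) with h | h <;> simp [h]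

variable (d : V → ℕ) (H : V → V → ℕ)

private def mstep (hsymm : ∀ u v, H u v = H v u)
    (e : ∀ u, Fin (d u) ≃ {v // H u v = 1}) (u : V) (w : {v // H u v = 1}) :
    Σ u, Fin (d u) :=
  ⟨w.1, (e w.1).symm ⟨u, by rw [hsymm]; exact w.2⟩⟩

private def mnext (hsymm : ∀ u v, H u v = H v u)
    (e : ∀ u, Fin (d u) ≃ {v // H u v = 1}) : (Σ u, Fin (d u)) → (Σ u, Fin (d u)) :=
  fun z => mstep d H hsymm e z.1 (e z.1 z.2)

private lemma mnext_invol (hsymm : ∀ u v, H u v = H v u)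
    (e : ∀ u, Fin (d u) ≃ {v // H u v = 1}) :
    Function.Involutive (mnext d H hsymm e) := by
  rintro ⟨u, x⟩
  have h : H (e u x).1 u = 1 := by rw [hsymm]; exact (e u x).2
  have h1 : (e (e u x).1) ((e (e u x).1).symm ⟨u, h⟩) = ⟨u, h⟩ :=
    Equiv.apply_symm_apply _ _
  have h2 : mnext d H hsymm e (mnext d H hsymm e ⟨u, x⟩)
      = mstep d H hsymm e (e u x).1 ⟨u, h⟩ :=
    congrArg (mstep d H hsymm e (e u x).1) h1
  rw [h2]
  exact congrArg (Sigma.mk u)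
    (((e u).symm_apply_eq).mpr (Subtype.ext rfl :
      (⟨(e u x).1, (e u x).2⟩ : {v // H u v = 1}) = e u x))

private lemma mnext_fpf (hsymm : ∀ u v, H u v = H v u) (hdiag : ∀ u, H u u = 0)
    (e : ∀ u, Fin (d u) ≃ {v // H u v = 1}) (z : Σ u, Fin (d u)) :
    mnext d H hsymm e z ≠ z := by
  intro hz
  have h1 : (e z.1 z.2).1 = z.1 := congrArg Sigma.fst hz
  have h2 := (e z.1 z.2).2
  rw [h1, hdiag] at h2
  omega

private lemma mnext_count (hsymm : ∀ u v, H u v = H v u) (hle : ∀ u v, H u v ≤ 1)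
    (e : ∀ u, Fin (d u) ≃ {v // H u v = 1}) (i j : V)
    (f : (Σ u, Fin (d u)) → (Σ u, Fin (d u)))
    (hf : ∀ z, f z = mnext d H hsymm e z) :
    Nat.card {z : Σ u, Fin (d u) // z.1 = i ∧ (f z).1 = j} = H i j := by
  have e1 : {z : Σ u, Fin (d u) // z.1 = i ∧ (f z).1 = j}
      ≃ {t : {z : Σ u, Fin (d u) // z.1 = i} // (f t.1).1 = j} :=
    (Equiv.subtypeSubtypeEquivSubtypeInter _ _).symm
  have e2 : {t : {z : Σ u, Fin (d u) // z.1 = i} // (f t.1).1 = j}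
      ≃ {y : Fin (d i) // (e i y).1 = j} := by
    refine Equiv.subtypeEquiv (sigmaFstFiberEquiv d i) ?_
    rintro ⟨⟨u, x⟩, hu⟩
    cases hu
    rw [hf]
    exact Iff.rfl
  have e3 : {y : Fin (d i) // (e i y).1 = j} ≃ {w : {v // H i v = 1} // w.1 = j} :=
    Equiv.subtypeEquiv (e i) (fun y => Iff.rfl)
  rw [Nat.card_congr ((e1.trans e2).trans e3)]
  exact card_nbr_fiber (H i) (hle i) j

/-- Counting perfect matchings on `Σ u, Fin (d u)` inducing a given simple graph `H`. -/
theorem card_matchings_counts (hsymm : ∀ u v, H u v = H v u)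
    (hle : ∀ u v, H u v ≤ 1) (hdiag : ∀ u, H u u = 0)
    (hdeg : ∀ u, d u = ∑ v, H u v) :
    Nat.card {σ : {f : Equiv.Perm (Σ u, Fin (d u)) // ∀ x, f (f x) = x ∧ f x ≠ x} //
        ∀ i j, Nat.card {x : Σ u, Fin (d u) // x.1 = i ∧ (σ.1 x).1 = j} = H i j} =
      ∏ u, Nat.factorial (d u) := by
  classical
  set F : (∀ u, Fin (d u) ≃ {v // H u v = 1}) →
      {σ : {f : Equiv.Perm (Σ u, Fin (d u)) // ∀ x, f (f x) = x ∧ f x ≠ x} //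
        ∀ i j, Nat.card {x : Σ u, Fin (d u) // x.1 = i ∧ (σ.1 x).1 = j} = H i j} :=
    fun e => ⟨⟨(mnext_invol d H hsymm e).toPerm,
        fun z => ⟨mnext_invol d H hsymm e z, mnext_fpf d H hsymm hdiag e z⟩⟩,
      fun i j => mnext_count d H hsymm hle e i j _ (fun z => rfl)⟩ with hFdef
  have hinj : Function.Injective F := by
    intro e e' hee
    have hval : ∀ z, mnext d H hsymm e z = mnext d H hsymm e' z := by
      intro z
      exact congrArg (fun σ => σ.1.1 z) hee
    funext u
    apply Equiv.ext
    intro x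
    apply Subtype.ext
    exact congrArg Sigma.fst (hval ⟨u, x⟩)
  have hsurj : Function.Surjective F := by
    rintro ⟨⟨σ, hm⟩, hc⟩
    -- the neighbor map
    have hmem : ∀ (u : V) (x : Fin (d u)), H u (σ ⟨u, x⟩).1 = 1 := by
      intro u x
      have hpos : 0 < Nat.card {z : Σ u, Fin (d u) // z.1 = u ∧ (σ z).1 = (σ ⟨u, x⟩).1} :=
        Nat.card_pos_iff.mpr ⟨⟨⟨⟨u, x⟩, rfl, rfl⟩⟩, inferInstance⟩
      rw [hc u (σ ⟨u, x⟩).1] at hpos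
      have := hle u (σ ⟨u, x⟩).1
      omega
    set t : ∀ u, Fin (d u) → {v // H u v = 1} :=
      fun u x => ⟨(σ ⟨u, x⟩).1, hmem u x⟩ with htdef
    have htinj : ∀ u, Function.Injective (t u) := by
      intro u x x' hxx
      by_contra hne
      have hne2 : (⟨⟨u, x⟩, rfl, rfl⟩ : {z : Σ u, Fin (d u) // z.1 = u ∧ (σ z).1 = (σ ⟨u, x⟩).1})
          ≠ ⟨⟨u, x'⟩, rfl, congrArg Subtype.val hxx.symm⟩ := by
        intro hcon
        apply hne
        have := congrArg (fun w => w.1) hcon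
        simpa using this
      have h2 : 1 < Nat.card {z : Σ u, Fin (d u) // z.1 = u ∧ (σ z).1 = (σ ⟨u, x⟩).1} := by
        rw [Nat.card_eq_fintype_card, Fintype.one_lt_card_iff_nontrivial]
        exact ⟨_, _, hne2⟩
      rw [hc u (σ ⟨u, x⟩).1] at h2
      have := hle u (σ ⟨u, x⟩).1
      omega
    have htbij : ∀ u, Function.Bijective (t u) := by
      intro u
      rw [Fintype.bijective_iff_injective_and_card]
      refine ⟨htinj u, ?_⟩
      rw [Fintype.card_fin, card_nbr (H u) (hle u), hdeg u]
    set e : ∀ u, Fin (d u) ≃ {v // H u v = 1} := fun u => Equiv.ofBijective _ (htbij u) with hedef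
    refine ⟨e, ?_⟩
    apply Subtype.ext
    apply Subtype.ext
    apply Equiv.ext
    rintro ⟨u, x⟩
    show mnext d H hsymm e ⟨u, x⟩ = σ ⟨u, x⟩
    -- mnext e ⟨u,x⟩ = ⟨(σ ⟨u,x⟩).1, (e (σ ⟨u,x⟩).1).symm ⟨u, _⟩⟩
    have hproof : H (σ ⟨u, x⟩).1 u = 1 := by rw [hsymm]; exact hmem u x
    have hkey : e (σ ⟨u, x⟩).1 ((σ ⟨u, x⟩).2) = ⟨u, hproof⟩ := by
      apply Subtype.ext
      show (σ ⟨(σ ⟨u, x⟩).1, (σ ⟨u, x⟩).2⟩).1 = u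
      have : (⟨(σ ⟨u, x⟩).1, (σ ⟨u, x⟩).2⟩ : Σ u, Fin (d u)) = σ ⟨u, x⟩ := rfl
      rw [this, (hm ⟨u, x⟩).1]
    have h2 : (e (σ ⟨u, x⟩).1).symm ⟨u, hproof⟩ = (σ ⟨u, x⟩).2 := by
      rw [← hkey, Equiv.symm_apply_apply]
    show mstep d H hsymm e u (e u x) = σ ⟨u, x⟩
    show (⟨(σ ⟨u, x⟩).1, (e (σ ⟨u, x⟩).1).symm ⟨u, _⟩⟩ : Σ u, Fin (d u)) = σ ⟨u, x⟩
    refine Eq.trans (congrArg (Sigma.mk (σ ⟨u, x⟩).1) ?_) rfl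
    show (e (σ ⟨u, x⟩).1).symm ⟨u, _⟩ = (σ ⟨u, x⟩).2
    rw [← hkey, Equiv.symm_apply_apply]
  have := Nat.card_eq_of_bijective F ⟨hinj, hsurj⟩
  rw [← this, Nat.card_pi]
  apply Finset.prod_congr rfl
  intro u _
  have hcards : Fintype.card (Fin (d u)) = Fintype.card {v // H u v = 1} :=
    calc Fintype.card (Fin (d u)) = d u := Fintype.card_fin _
    _ = ∑ v, H u v := hdeg u
    _ = Fintype.card {v // H u v = 1} := (card_nbr (H u) (hle u)).symm
  calc Nat.card (Fin (d u) ≃ {v // H u v = 1})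
      = Fintype.card (Fin (d u) ≃ {v // H u v = 1}) := Nat.card_eq_fintype_card
    _ = Nat.factorial (Fintype.card (Fin (d u))) :=
        Fintype.card_equiv (Fintype.equivOfCardEq hcards)
    _ = Nat.factorial (d u) := by rw [Fintype.card_fin]

end Counts


section BijCount

variable {V : Type*} [Fintype V] [DecidableEq V]

private lemma sig_reassemble {b : V → ℕ} (v : V) (w : Σ v', Fin (b v')) (hw : w.1 = v) :
    (⟨v, sigmaFstFiberEquiv b v ⟨w, hw⟩⟩ : Σ v', Fin (b v')) = w := by
  obtain ⟨v', y⟩ := w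
  subst hw
  rfl

private lemma mk_inj {b : V → ℕ} (v : V) {y y' : Fin (b v)}
    (h : (⟨v, y⟩ : Σ v', Fin (b v')) = ⟨v, y'⟩) : y = y' := by
  exact sigma_mk_injective (β := fun v' => Fin (b v')) h

variable (a b : V → ℕ) (H : V → V → ℕ)

private def bstep1 (m : ∀ v, {u // H u v = 1} ≃ Fin (b v)) (u : V)
    (w : {v // H u v = 1}) : Σ v, Fin (b v) :=
  ⟨w.1, m w.1 ⟨u, w.2⟩⟩

private def bstep2 (e : ∀ u, Fin (a u) ≃ {v // H u v = 1}) (v : V)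
    (q : {u // H u v = 1}) : Σ u, Fin (a u) :=
  ⟨q.1, (e q.1).symm ⟨v, q.2⟩⟩

private def bfwd (e : ∀ u, Fin (a u) ≃ {v // H u v = 1})
    (m : ∀ v, {u // H u v = 1} ≃ Fin (b v)) : (Σ u, Fin (a u)) → Σ v, Fin (b v) :=
  fun z => bstep1 b H m z.1 (e z.1 z.2)

private def bbwd (e : ∀ u, Fin (a u) ≃ {v // H u v = 1})
    (m : ∀ v, {u // H u v = 1} ≃ Fin (b v)) : (Σ v, Fin (b v)) → Σ u, Fin (a u) :=
  fun w => bstep2 a H e w.1 ((m w.1).symm w.2)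

private def bEquiv (e : ∀ u, Fin (a u) ≃ {v // H u v = 1})
    (m : ∀ v, {u // H u v = 1} ≃ Fin (b v)) : (Σ u, Fin (a u)) ≃ Σ v, Fin (b v) where
  toFun := bfwd a b H e m
  invFun := bbwd a b H e m
  left_inv := by
    rintro ⟨u, x⟩
    have h1 : (m (e u x).1).symm (m (e u x).1 ⟨u, (e u x).2⟩) = ⟨u, (e u x).2⟩ :=
      Equiv.symm_apply_apply _ _
    have h2 : bbwd a b H e m (bfwd a b H e m ⟨u, x⟩)
        = bstep2 a H e (e u x).1 ⟨u, (e u x).2⟩ :=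
      congrArg (bstep2 a H e (e u x).1) h1
    rw [h2]
    exact congrArg (Sigma.mk u)
      (((e u).symm_apply_eq).mpr (Subtype.ext rfl :
        (⟨(e u x).1, (e u x).2⟩ : {v // H u v = 1}) = e u x))
  right_inv := by
    rintro ⟨v, y⟩
    have h1 : e ((m v).symm y).1 ((e ((m v).symm y).1).symm ⟨v, ((m v).symm y).2⟩)
        = ⟨v, ((m v).symm y).2⟩ := Equiv.apply_symm_apply _ _
    have h2 : bfwd a b H e m (bbwd a b H e m ⟨v, y⟩)
        = bstep1 b H m ((m v).symm y).1 ⟨v, ((m v).symm y).2⟩ :=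
      congrArg (bstep1 b H m ((m v).symm y).1) h1
    rw [h2]
    refine congrArg (Sigma.mk v) ?_
    show m v ⟨((m v).symm y).1, ((m v).symm y).2⟩ = y
    have : (⟨((m v).symm y).1, ((m v).symm y).2⟩ : {u // H u v = 1}) = (m v).symm y :=
      Subtype.ext rfl
    rw [this, Equiv.apply_symm_apply]

private lemma bfwd_count (hle : ∀ u v, H u v ≤ 1)
    (e : ∀ u, Fin (a u) ≃ {v // H u v = 1})
    (m : ∀ v, {u // H u v = 1} ≃ Fin (b v)) (i j : V)
    (f : (Σ u, Fin (a u)) → Σ v, Fin (b v))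
    (hf : ∀ z, f z = bfwd a b H e m z) :
    Nat.card {z : Σ u, Fin (a u) // z.1 = i ∧ (f z).1 = j} = H i j := by
  have e1 : {z : Σ u, Fin (a u) // z.1 = i ∧ (f z).1 = j}
      ≃ {t : {z : Σ u, Fin (a u) // z.1 = i} // (f t.1).1 = j} :=
    (Equiv.subtypeSubtypeEquivSubtypeInter _ _).symm
  have e2 : {t : {z : Σ u, Fin (a u) // z.1 = i} // (f t.1).1 = j}
      ≃ {y : Fin (a i) // (e i y).1 = j} := by
    refine Equiv.subtypeEquiv (sigmaFstFiberEquiv a i) ?_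
    rintro ⟨⟨u, x⟩, hu⟩
    cases hu
    rw [hf]
    exact Iff.rfl
  have e3 : {y : Fin (a i) // (e i y).1 = j} ≃ {w : {v // H i v = 1} // w.1 = j} :=
    Equiv.subtypeEquiv (e i) (fun y => Iff.rfl)
  rw [Nat.card_congr ((e1.trans e2).trans e3)]
  exact card_nbr_fiber (H i) (hle i) j

theorem card_bijections_counts (hle : ∀ u v, H u v ≤ 1)
    (hrow : ∀ u, a u = ∑ v, H u v) (hcol : ∀ v, b v = ∑ u, H u v) :
    Nat.card {f : (Σ u, Fin (a u)) ≃ Σ v, Fin (b v) //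
        ∀ i j, Nat.card {x : Σ u, Fin (a u) // x.1 = i ∧ (f.1 x).1 = j} = H i j} =
      (∏ u, Nat.factorial (a u)) * ∏ v, Nat.factorial (b v) := by
  classical
  set F : ((∀ u, Fin (a u) ≃ {v // H u v = 1}) × (∀ v, {u // H u v = 1} ≃ Fin (b v))) →
      {f : (Σ u, Fin (a u)) ≃ Σ v, Fin (b v) //
        ∀ i j, Nat.card {x : Σ u, Fin (a u) // x.1 = i ∧ (f.1 x).1 = j} = H i j} :=
    fun p => ⟨bEquiv a b H p.1 p.2,
      fun i j => bfwd_count a b H hle p.1 p.2 i j _ (fun z => rfl)⟩ with hFdef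
  have hinj : Function.Injective F := by
    rintro ⟨e, m⟩ ⟨e', m'⟩ hee
    have hval : ∀ z, bfwd a b H e m z = bfwd a b H e' m' z :=
      fun z => congrArg (fun σ => σ.1.1 z) hee
    have he : e = e' := by
      funext u
      apply Equiv.ext
      intro x
      apply Subtype.ext
      exact congrArg Sigma.fst (hval ⟨u, x⟩)
    subst he
    have hm : m = m' := by
      funext v
      apply Equiv.ext
      rintro q
      have hq : e q.1 ((e q.1).symm ⟨v, q.2⟩) = ⟨v, q.2⟩ := Equiv.apply_symm_apply _ _
      have h1 : bfwd a b H e m ⟨q.1, (e q.1).symm ⟨v, q.2⟩⟩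
          = bstep1 b H m q.1 ⟨v, q.2⟩ := by
        show bstep1 b H m q.1 (e q.1 ((e q.1).symm ⟨v, q.2⟩)) = _
        rw [hq]
      have h2 : bfwd a b H e m' ⟨q.1, (e q.1).symm ⟨v, q.2⟩⟩
          = bstep1 b H m' q.1 ⟨v, q.2⟩ := by
        show bstep1 b H m' q.1 (e q.1 ((e q.1).symm ⟨v, q.2⟩)) = _
        rw [hq]
      have h3 : (⟨v, m v ⟨q.1, q.2⟩⟩ : Σ v', Fin (b v')) = ⟨v, m' v ⟨q.1, q.2⟩⟩ := by
        have h5 := hval ⟨q.1, (e q.1).symm ⟨v, q.2⟩⟩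
        rw [h1, h2] at h5
        exact h5
      have h4 : m v ⟨q.1, q.2⟩ = m' v ⟨q.1, q.2⟩ := mk_inj v h3
      have hqq : (⟨q.1, q.2⟩ : {u // H u v = 1}) = q := Subtype.ext rfl
      rw [hqq] at h4
      exact h4
    subst hm
    rfl
  have hsurj : Function.Surjective F := by
    rintro ⟨f, hcf⟩
    replace hcf : ∀ i j, Nat.card {x : Σ u, Fin (a u) // x.1 = i ∧ (f x).1 = j} = H i j := hcf
    have hmem : ∀ (u : V) (x : Fin (a u)), H u (f ⟨u, x⟩).1 = 1 := by
      intro u x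
      have hpos : 0 < Nat.card {z : Σ u, Fin (a u) // z.1 = u ∧ (f z).1 = (f ⟨u, x⟩).1} :=
        Nat.card_pos_iff.mpr ⟨⟨⟨⟨u, x⟩, rfl, rfl⟩⟩, inferInstance⟩
      rw [hcf u (f ⟨u, x⟩).1] at hpos
      have := hle u (f ⟨u, x⟩).1
      omega
    set t : ∀ u, Fin (a u) → {v // H u v = 1} :=
      fun u x => ⟨(f ⟨u, x⟩).1, hmem u x⟩ with htdef
    have htinj : ∀ u, Function.Injective (t u) := by
      intro u x x' hxx
      by_contra hne
      have hne2 : (⟨⟨u, x⟩, rfl, rfl⟩ :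
          {z : Σ u, Fin (a u) // z.1 = u ∧ (f z).1 = (f ⟨u, x⟩).1})
          ≠ ⟨⟨u, x'⟩, rfl, congrArg Subtype.val hxx.symm⟩ := by
        intro hcon
        apply hne
        have := congrArg (fun w => w.1) hcon
        simpa using this
      have h2 : 1 < Nat.card {z : Σ u, Fin (a u) // z.1 = u ∧ (f z).1 = (f ⟨u, x⟩).1} := by
        rw [Nat.card_eq_fintype_card, Fintype.one_lt_card_iff_nontrivial]
        exact ⟨_, _, hne2⟩
      rw [hcf u (f ⟨u, x⟩).1] at h2
      have := hle u (f ⟨u, x⟩).1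
      omega
    have htbij : ∀ u, Function.Bijective (t u) := by
      intro u
      rw [Fintype.bijective_iff_injective_and_card]
      refine ⟨htinj u, ?_⟩
      rw [Fintype.card_fin, card_nbr (fun v => H u v) (hle u), hrow u]
    set e : ∀ u, Fin (a u) ≃ {v // H u v = 1} := fun u => Equiv.ofBijective _ (htbij u)
      with hedef
    have hefst : ∀ (u : V) (x : Fin (a u)), (e u x).1 = (f ⟨u, x⟩).1 := fun u x => rfl
    set s : ∀ v, {u // H u v = 1} → Fin (b v) := fun v q =>
      sigmaFstFiberEquiv b v ⟨f ⟨q.1, (e q.1).symm ⟨v, q.2⟩⟩, by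
        rw [← hefst, Equiv.apply_symm_apply]⟩ with hsdef
    have hsinj : ∀ v, Function.Injective (s v) := by
      intro v q q' hqq
      have h1 := (sigmaFstFiberEquiv b v).injective hqq
      have h2 : (⟨q.1, (e q.1).symm ⟨v, q.2⟩⟩ : Σ u, Fin (a u))
          = ⟨q'.1, (e q'.1).symm ⟨v, q'.2⟩⟩ := f.injective (congrArg Subtype.val h1)
      exact Subtype.ext (congrArg Sigma.fst h2)
    have hsbij : ∀ v, Function.Bijective (s v) := by
      intro v
      rw [Fintype.bijective_iff_injective_and_card]
      refine ⟨hsinj v, ?_⟩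
      rw [Fintype.card_fin, card_nbr (fun u => H u v) (fun u => hle u v), hcol v]
    set m : ∀ v, {u // H u v = 1} ≃ Fin (b v) := fun v => Equiv.ofBijective _ (hsbij v)
      with hmdef
    refine ⟨⟨e, m⟩, ?_⟩
    apply Subtype.ext
    apply Equiv.ext
    rintro ⟨u, x⟩
    show bfwd a b H e m ⟨u, x⟩ = f ⟨u, x⟩
    have hxx : (e u).symm ⟨(e u x).1, (e u x).2⟩ = x := by
      rw [Equiv.symm_apply_eq]
    have pfX : (f ⟨u, (e u).symm ⟨(e u x).1, (e u x).2⟩⟩).1 = (e u x).1 := by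
      rw [hxx]
      exact (hefst u x).symm
    have key : (⟨(e u x).1, m (e u x).1 ⟨u, (e u x).2⟩⟩ : Σ v'', Fin (b v''))
        = f ⟨u, (e u).symm ⟨(e u x).1, (e u x).2⟩⟩ :=
      sig_reassemble (e u x).1 (f ⟨u, (e u).symm ⟨(e u x).1, (e u x).2⟩⟩) pfX
    exact key.trans (congrArg (fun y => f ⟨u, y⟩) hxx)
  have := Nat.card_eq_of_bijective F ⟨hinj, hsurj⟩
  rw [← this, Nat.card_prod, Nat.card_pi, Nat.card_pi]
  congr 1
  · apply Finset.prod_congr rfl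
    intro u _
    have hcards : Fintype.card (Fin (a u)) = Fintype.card {v // H u v = 1} :=
      calc Fintype.card (Fin (a u)) = a u := Fintype.card_fin _
      _ = ∑ v, H u v := hrow u
      _ = Fintype.card {v // H u v = 1} := (card_nbr (fun v => H u v) (hle u)).symm
    calc Nat.card (Fin (a u) ≃ {v // H u v = 1})
        = Fintype.card (Fin (a u) ≃ {v // H u v = 1}) := Nat.card_eq_fintype_card
      _ = Nat.factorial (Fintype.card (Fin (a u))) :=
          Fintype.card_equiv (Fintype.equivOfCardEq hcards)
      _ = Nat.factorial (a u) := by rw [Fintype.card_fin]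
  · apply Finset.prod_congr rfl
    intro v _
    have hcards : Fintype.card {u // H u v = 1} = Fintype.card (Fin (b v)) := by
      rw [Fintype.card_fin, card_nbr (fun u => H u v) (fun u => hle u v)]
      exact (hcol v).symm
    calc Nat.card ({u // H u v = 1} ≃ Fin (b v))
        = Fintype.card ({u // H u v = 1} ≃ Fin (b v)) := Nat.card_eq_fintype_card
      _ = Nat.factorial (Fintype.card {u // H u v = 1}) :=
          Fintype.card_equiv (Fintype.equivOfCardEq hcards)
      _ = Nat.factorial (b v) := by rw [hcards, Fintype.card_fin]

end BijCount


section SplitC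

variable {L : ℕ} {M : Type*} [CommMonoid M]

lemma filter_lt_ne (hL : True) :
    (univ.filter (fun c : Fin L × Fin L => ¬c.1 = c.2)).filter (fun c => c.1 < c.2)
      = univ.filter (fun c : Fin L × Fin L => c.1 < c.2) := by
  rw [Finset.filter_filter]
  apply Finset.filter_congr
  intro c _
  constructor
  · rintro ⟨_, h⟩; exact h
  · intro h; exact ⟨ne_of_lt h, h⟩

lemma filter_not_lt_ne :
    (univ.filter (fun c : Fin L × Fin L => ¬c.1 = c.2)).filter (fun c => ¬c.1 < c.2)
      = univ.filter (fun c : Fin L × Fin L => c.2 < c.1) := by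
  rw [Finset.filter_filter]
  apply Finset.filter_congr
  intro c _
  constructor
  · rintro ⟨h1, h2⟩
    exact lt_of_le_of_ne (le_of_not_gt h2) (fun e => h1 e.symm)
  · intro h
    exact ⟨fun e => absurd (e ▸ h) (lt_irrefl _), not_lt_of_gt h⟩

@[to_additive]
lemma prod_gt_eq_prod_lt_swap (g : Fin L × Fin L → M) :
    ∏ c ∈ univ.filter (fun c : Fin L × Fin L => c.2 < c.1), g c
      = ∏ c ∈ univ.filter (fun c : Fin L × Fin L => c.1 < c.2), g c.swap := by
  apply Finset.prod_nbij' (fun c => Prod.swap c) (fun c => Prod.swap c)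
  · intro c hc
    simp only [mem_filter, mem_univ, true_and] at hc ⊢
    exact hc
  · intro c hc
    simp only [mem_filter, mem_univ, true_and] at hc ⊢
    exact hc
  · intro c _; rfl
  · intro c _; rfl
  · intro c _; rfl

@[to_additive]
lemma prod_eq_diag (g : Fin L × Fin L → M) :
    ∏ c ∈ univ.filter (fun c : Fin L × Fin L => c.1 = c.2), g c = ∏ k : Fin L, g (k, k) := by
  apply Finset.prod_nbij' (fun c => c.1) (fun k => (k, k))
  · intro c hc; exact mem_univ _
  · intro k _
    simp only [mem_filter, mem_univ, true_and]
  · intro c hc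
    simp only [mem_filter, mem_univ, true_and] at hc
    exact Prod.ext rfl hc
  · intro k _; rfl
  · intro c hc
    simp only [mem_filter, mem_univ, true_and] at hc
    rw [show c = (c.1, c.2) from rfl]
    rw [← hc]

lemma prod_split_colors (g : Fin L × Fin L → M) :
    ∏ c : Fin L × Fin L, g c =
      (∏ k : Fin L, g (k, k)) *
        ((∏ c ∈ univ.filter (fun c : Fin L × Fin L => c.1 < c.2), g c) *
          ∏ c ∈ univ.filter (fun c : Fin L × Fin L => c.1 < c.2), g c.swap) := by
  rw [← Finset.prod_filter_mul_prod_filter_not univ (fun c : Fin L × Fin L => c.1 = c.2) g]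
  rw [prod_eq_diag]
  congr 1
  rw [← Finset.prod_filter_mul_prod_filter_not
    (univ.filter (fun c : Fin L × Fin L => ¬c.1 = c.2)) (fun c => c.1 < c.2) g]
  rw [filter_lt_ne trivial, filter_not_lt_ne, prod_gt_eq_prod_lt_swap]

lemma even_sum_colors (g : Fin L × Fin L → ℕ)
    (hswap : ∀ c, g c.swap = g c) (hdiag : ∀ k, Even (g (k, k))) :
    Even (∑ c : Fin L × Fin L, g c) := by
  rw [← Finset.sum_filter_add_sum_filter_not univ (fun c : Fin L × Fin L => c.1 = c.2) g]
  apply Even.add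
  · rw [sum_eq_diag g]
    exact Finset.even_sum _ (fun k _ => hdiag k)
  · rw [← Finset.sum_filter_add_sum_filter_not
      (univ.filter (fun c : Fin L × Fin L => ¬c.1 = c.2)) (fun c => c.1 < c.2) g]
    rw [filter_lt_ne trivial, filter_not_lt_ne, sum_gt_eq_sum_lt_swap g]
    rw [Finset.sum_congr rfl (fun c _ => hswap c)]
    exact Even.add_self _

end SplitC

section ConfigCard

variable (L n : ℕ) (D : Fin n → Fin L × Fin L → ℕ)

def configEquiv : Config L n D ≃
    ((∀ k : Fin L, {f : Equiv.Perm (CW L n D (k, k)) // ∀ x, f (f x) = x ∧ f x ≠ x}) ×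
      (∀ c : Fin L × Fin L, c.1 < c.2 → (CW L n D c ≃ CW L n D c.swap))) where
  toFun σ := (fun k => ⟨σ.1.1 k, fun x => σ.2 k x⟩, σ.1.2)
  invFun p := ⟨(fun k => (p.1 k).1, p.2), fun k x => (p.1 k).2 x⟩
  left_inv σ := rfl
  right_inv p := rfl

def propArrowEquiv {p : Prop} (hp : p) (X : Type*) : (p → X) ≃ X where
  toFun f := f hp
  invFun x _ := x
  left_inv f := funext fun _ => rfl
  right_inv x := rfl

lemma card_CW (c : Fin L × Fin L) : Fintype.card (CW L n D c) = ∑ u, D u c := by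
  simp [CW]

theorem card_config
    (hadm1 : ∀ c : Fin L × Fin L, ∑ u, D u c = ∑ u, D u c.swap)
    (hadm2 : ∀ k : Fin L, Even (∑ u, D u (k, k))) :
    Nat.card (Config L n D) =
      (∏ c ∈ univ.filter (fun c : Fin L × Fin L => c.1 < c.2),
          Nat.factorial (∑ u, D u c)) *
        ∏ k : Fin L, Nat.doubleFactorial (∑ u, D u (k, k) - 1) := by
  rw [Nat.card_congr (configEquiv L n D), Nat.card_prod, Nat.card_pi, Nat.card_pi]
  rw [mul_comm]
  congr 1
  · have hc : ∀ c : Fin L × Fin L,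
        Nat.card (c.1 < c.2 → (CW L n D c ≃ CW L n D c.swap))
          = if c.1 < c.2 then Nat.factorial (∑ u, D u c) else 1 := by
      intro c
      by_cases hlt : c.1 < c.2
      · rw [if_pos hlt, Nat.card_congr (propArrowEquiv hlt _), Nat.card_eq_fintype_card,
          Fintype.card_equiv (Fintype.equivOfCardEq (by
            rw [card_CW, card_CW]; exact hadm1 c)), card_CW]
      · rw [if_neg hlt]
        haveI : Subsingleton (c.1 < c.2 → (CW L n D c ≃ CW L n D c.swap)) :=
          ⟨fun f g => funext fun h => absurd h hlt⟩
        haveI : Nonempty (c.1 < c.2 → (CW L n D c ≃ CW L n D c.swap)) :=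
          ⟨fun h => absurd h hlt⟩
        exact Nat.card_unique
    rw [Finset.prod_congr rfl (fun c _ => hc c), ← Finset.prod_filter]
  · apply Finset.prod_congr rfl
    intro k _
    exact card_matchings (∑ u, D u (k, k)) (CW L n D (k, k)) (card_CW L n D (k, k)) (hadm2 k)

lemma gamma_diag (σ : Config L n D) (k : Fin L) (i j : Fin n) :
    Gamma L n D σ (k, k) i j
      = Nat.card {x : CW L n D (k, k) // x.1 = i ∧ (σ.1.1 k x).1 = j} := by
  rw [Gamma, dif_pos rfl]

lemma gamma_lt (σ : Config L n D) (c : Fin L × Fin L) (hlt : c.1 < c.2) (i j : Fin n) :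
    Gamma L n D σ c i j
      = Nat.card {x : CW L n D c // x.1 = i ∧ (σ.1.2 c hlt x).1 = j} := by
  rw [Gamma, dif_neg (ne_of_lt hlt), dif_pos hlt]

lemma gamma_gt (σ : Config L n D) (c : Fin L × Fin L) (hgt : c.2 < c.1)
    (hlt : c.swap.1 < c.swap.2) (i j : Fin n) :
    Gamma L n D σ c i j
      = Nat.card {x : CW L n D c.swap // x.1 = j ∧ (σ.1.2 c.swap hlt x).1 = i} := by
  have hne : ¬ c.1 = c.2 := fun e => absurd (e ▸ hgt) (lt_irrefl _)
  rw [Gamma, dif_neg hne, dif_neg (not_lt_of_gt hgt)]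

lemma gamma_gt_swap (σ : Config L n D) (c : Fin L × Fin L) (hgt : c.2 < c.1) (i j : Fin n) :
    Gamma L n D σ c i j = Gamma L n D σ c.swap j i := by
  rw [gamma_gt L n D σ c hgt hgt i j, gamma_lt L n D σ c.swap hgt j i]

/-- flip equivalence for involutions -/
def flipEquiv {γ : Type*} {V : Type*} (f : γ → γ) (g : γ → V)
    (hinv : ∀ x, f (f x) = x) (i j : V) :
    {x : γ // g x = i ∧ g (f x) = j} ≃ {x : γ // g x = j ∧ g (f x) = i} where
  toFun x := ⟨f x.1, x.2.2, by rw [hinv]; exact x.2.1⟩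
  invFun x := ⟨f x.1, x.2.2, by rw [hinv]; exact x.2.1⟩
  left_inv x := Subtype.ext (hinv x.1)
  right_inv x := Subtype.ext (hinv x.1)

theorem gamma_isMultigraph (σ : Config L n D) : IsMultigraph L n D (Gamma L n D σ) := by
  refine ⟨?_, ?_, ?_, ?_⟩
  · intro k i j
    rw [gamma_diag, gamma_diag]
    exact Nat.card_congr
      (flipEquiv (fun x => σ.1.1 k x) (fun x => x.1) (fun x => (σ.2 k x).1) i j)
  · intro k i
    rw [gamma_diag]
    apply even_card_of_fpf
      (g := fun x : {x : CW L n D (k, k) // x.1 = i ∧ (σ.1.1 k x).1 = i} =>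
        (⟨σ.1.1 k x.1, x.2.2, by rw [(σ.2 k x.1).1]; exact x.2.1⟩ :
          {x : CW L n D (k, k) // x.1 = i ∧ (σ.1.1 k x).1 = i}))
    · intro x
      exact Subtype.ext ((σ.2 k x.1).1)
    · intro x hx
      exact (σ.2 k x.1).2 (congrArg Subtype.val hx)
  · intro c hne i j
    rcases lt_or_gt_of_ne hne with hlt | hgt
    · exact (gamma_gt_swap L n D σ c.swap hlt j i).symm
    · exact gamma_gt_swap L n D σ c hgt i j
  · intro i c
    by_cases heq : c.1 = c.2
    · have hc : c = (c.1, c.1) := Prod.ext rfl heq.symm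
      rw [hc]
      rw [Finset.sum_congr rfl (fun j _ => gamma_diag L n D σ c.1 i j)]
      rw [sum_card_fiber (fun x : CW L n D (c.1, c.1) => x.1 = i)
        (fun x => (σ.1.1 c.1 x).1)]
      exact (card_sigmaFstFiber (fun u => D u (c.1, c.1)) i).symm
    · rcases lt_or_gt_of_ne heq with hlt | hgt
      · rw [Finset.sum_congr rfl (fun j _ => gamma_lt L n D σ c hlt i j)]
        rw [sum_card_fiber (fun x : CW L n D c => x.1 = i)
          (fun x => (σ.1.2 c hlt x).1)]
        exact (card_sigmaFstFiber (fun u => D u c) i).symm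
      · rw [Finset.sum_congr rfl (fun j _ => gamma_gt L n D σ c hgt hgt i j)]
        have hcomm : ∀ j, Nat.card {x : CW L n D c.swap // x.1 = j ∧ (σ.1.2 c.swap hgt x).1 = i}
            = Nat.card {x : CW L n D c.swap // (σ.1.2 c.swap hgt x).1 = i ∧ x.1 = j} :=
          fun j => Nat.card_congr (Equiv.subtypeEquivRight (fun x => and_comm))
        rw [Finset.sum_congr rfl (fun j _ => hcomm j)]
        rw [sum_card_fiber (fun x : CW L n D c.swap => (σ.1.2 c.swap hgt x).1 = i)
          (fun x => x.1)]
        have he : {x : CW L n D c.swap // (σ.1.2 c.swap hgt x).1 = i}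
            ≃ {y : CW L n D c // y.1 = i} :=
          Equiv.subtypeEquiv (σ.1.2 c.swap hgt) (fun x => Iff.rfl)
        rw [Nat.card_congr he]
        exact (card_sigmaFstFiber (fun u => D u c) i).symm

end ConfigCard

section Simple

lemma hasCycleLen_one_iff (n : ℕ) (w : Fin n → Fin n → ℕ) :
    HasCycleLen n w 1 ↔ ∃ v : Fin n, 2 ≤ w v v := by
  rw [HasCycleLen]
  norm_num

lemma hasCycleLen_two_iff (n : ℕ) (w : Fin n → Fin n → ℕ) :
    HasCycleLen n w 2 ↔ ∃ u v : Fin n, u ≠ v ∧ 2 ≤ w u v := by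
  rw [HasCycleLen]
  norm_num

lemma simple_of_noShortCycle (L n : ℕ) (D : Fin n → Fin L × Fin L → ℕ)
    (H : Fin L × Fin L → Fin n → Fin n → ℕ) (hmg : IsMultigraph L n D H)
    (h : ℕ) (hh : 2 ≤ h) (hnsc : NoShortCycle n (colorBlind L n H) h) :
    (∀ c u v, H c u v ≤ 1) ∧ (∀ c u, H c u u = 0) := by
  have h1 : ∀ v, colorBlind L n H v v ≤ 1 := by
    intro v
    by_contra hcon
    push_neg at hcon
    exact hnsc 1 le_rfl (le_trans one_le_two hh)
      ((hasCycleLen_one_iff n _).mpr ⟨v, hcon⟩)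
  have h2 : ∀ u v, u ≠ v → colorBlind L n H u v ≤ 1 := by
    intro u v huv
    by_contra hcon
    push_neg at hcon
    exact hnsc 2 one_le_two hh ((hasCycleLen_two_iff n _).mpr ⟨u, v, huv, hcon⟩)
  have hdiag0 : ∀ v, colorBlind L n H v v = 0 := by
    intro v
    have heven : Even (colorBlind L n H v v) := by
      apply even_sum_colors (fun c => H c v v)
      · intro c
        by_cases heq : c.1 = c.2
        · have : c.swap = c := Prod.ext heq.symm heq
          rw [this]
        · exact (hmg.2.2.1 c heq v v).symm
      · intro k
        exact hmg.2.1 k v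
    rcases heven with ⟨t, ht⟩
    have := h1 v
    omega
  have hle : ∀ c u v, H c u v ≤ colorBlind L n H u v := by
    intro c u v
    show H c u v ≤ ∑ c' : Fin L × Fin L, H c' u v
    exact Finset.single_le_sum (f := fun c' => H c' u v)
      (fun c' _ => Nat.zero_le _) (Finset.mem_univ c)
  constructor
  · intro c u v
    by_cases huv : u = v
    · subst huv
      have := hle c u u
      rw [hdiag0 u] at this
      omega
    · exact le_trans (hle c u v) (h2 u v huv)
  · intro c u
    have := hle c u u
    rw [hdiag0 u] at this
    omega

end Simple

section Fiber

variable (L n : ℕ) (D : Fin n → Fin L × Fin L → ℕ)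

def fiberEquivProd (H : Fin L × Fin L → Fin n → Fin n → ℕ) (hmg : IsMultigraph L n D H) :
    {σ : Config L n D // Gamma L n D σ = H} ≃
      ((∀ k : Fin L, {f : {g : Equiv.Perm (CW L n D (k, k)) // ∀ x, g (g x) = x ∧ g x ≠ x} //
          ∀ i j, Nat.card {x : CW L n D (k, k) // x.1 = i ∧ (f.1 x).1 = j} = H (k, k) i j}) ×
        (∀ c : Fin L × Fin L, c.1 < c.2 →
          {f : CW L n D c ≃ CW L n D c.swap //
            ∀ i j, Nat.card {x : CW L n D c // x.1 = i ∧ (f.1 x).1 = j} = H c i j})) where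
  toFun σf :=
    (fun k => ⟨⟨σf.1.1.1 k, fun x => σf.1.2 k x⟩,
      fun i j => (gamma_diag L n D σf.1 k i j).symm.trans
        (congrFun (congrFun (congrFun σf.2 (k, k)) i) j)⟩,
     fun c hlt => ⟨σf.1.1.2 c hlt,
      fun i j => (gamma_lt L n D σf.1 c hlt i j).symm.trans
        (congrFun (congrFun (congrFun σf.2 c) i) j)⟩)
  invFun p := ⟨⟨⟨fun k => (p.1 k).1.1, fun c hlt => (p.2 c hlt).1⟩,
      fun k x => (p.1 k).1.2 x⟩, by
    funext c i j
    by_cases heq : c.1 = c.2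
    · have hc : c = (c.1, c.1) := Prod.ext rfl heq.symm
      rw [hc]
      exact (gamma_diag L n D _ c.1 i j).trans ((p.1 c.1).2 i j)
    · rcases lt_or_gt_of_ne heq with hlt | hgt
      · exact (gamma_lt L n D _ c hlt i j).trans ((p.2 c hlt).2 i j)
      · refine (gamma_gt L n D _ c hgt hgt i j).trans ?_
        exact ((p.2 c.swap hgt).2 j i).trans ((hmg.2.2.1 c heq i j).symm)⟩
  left_inv σf := Subtype.ext (Subtype.ext rfl)
  right_inv p := rfl

theorem card_fiber (H : Fin L × Fin L → Fin n → Fin n → ℕ) (hmg : IsMultigraph L n D H)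
    (hle : ∀ c u v, H c u v ≤ 1) (hdiag : ∀ c u, H c u u = 0) :
    Nat.card {σ : Config L n D // Gamma L n D σ = H}
      = ∏ c : Fin L × Fin L, ∏ u, Nat.factorial (D u c) := by
  rw [Nat.card_congr (fiberEquivProd L n D H hmg), Nat.card_prod, Nat.card_pi, Nat.card_pi]
  have hmatch : ∀ k : Fin L,
      Nat.card {f : {g : Equiv.Perm (CW L n D (k, k)) // ∀ x, g (g x) = x ∧ g x ≠ x} //
          ∀ i j, Nat.card {x : CW L n D (k, k) // x.1 = i ∧ (f.1 x).1 = j} = H (k, k) i j}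
        = ∏ u, Nat.factorial (D u (k, k)) := by
    intro k
    exact card_matchings_counts (fun u => D u (k, k)) (fun u v => H (k, k) u v)
      (fun u v => hmg.1 k u v) (fun u v => hle (k, k) u v) (fun u => hdiag (k, k) u)
      (fun u => hmg.2.2.2 u (k, k))
  have hbijc : ∀ c : Fin L × Fin L, c.1 < c.2 →
      Nat.card {f : CW L n D c ≃ CW L n D c.swap //
          ∀ i j, Nat.card {x : CW L n D c // x.1 = i ∧ (f.1 x).1 = j} = H c i j}
        = (∏ u, Nat.factorial (D u c)) * ∏ u, Nat.factorial (D u c.swap) := by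
    intro c hlt
    have hne : c.1 ≠ c.2 := ne_of_lt hlt
    exact card_bijections_counts (fun u => D u c) (fun u => D u c.swap)
      (fun u v => H c u v) (fun u v => hle c u v)
      (fun u => hmg.2.2.2 u c)
      (fun v => (hmg.2.2.2 v c.swap).trans
        (Finset.sum_congr rfl (fun j _ => (hmg.2.2.1 c hne j v).symm)))
  have hprodbij : ∀ c : Fin L × Fin L,
      Nat.card ((hlt : c.1 < c.2) → {f : CW L n D c ≃ CW L n D c.swap //
          ∀ i j, Nat.card {x : CW L n D c // x.1 = i ∧ (f.1 x).1 = j} = H c i j})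
        = if c.1 < c.2 then (∏ u, Nat.factorial (D u c)) * ∏ u, Nat.factorial (D u c.swap)
          else 1 := by
    intro c
    by_cases hlt : c.1 < c.2
    · rw [if_pos hlt, Nat.card_congr (propArrowEquiv hlt _)]
      exact hbijc c hlt
    · rw [if_neg hlt]
      haveI : Subsingleton ((hlt : c.1 < c.2) → {f : CW L n D c ≃ CW L n D c.swap //
          ∀ i j, Nat.card {x : CW L n D c // x.1 = i ∧ (f.1 x).1 = j} = H c i j}) :=
        ⟨fun f g => funext fun hc => absurd hc hlt⟩
      haveI : Nonempty ((hlt : c.1 < c.2) → {f : CW L n D c ≃ CW L n D c.swap //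
          ∀ i j, Nat.card {x : CW L n D c // x.1 = i ∧ (f.1 x).1 = j} = H c i j}) :=
        ⟨fun hc => absurd hc hlt⟩
      exact Nat.card_unique
  rw [Finset.prod_congr rfl (fun k _ => hmatch k),
    Finset.prod_congr rfl (fun c _ => hprodbij c), ← Finset.prod_filter]
  rw [prod_split_colors (fun c => ∏ u, Nat.factorial (D u c))]
  rw [Finset.prod_mul_distrib]

end Fiber

section Main

open Filter in
theorem key_count (θ L n : ℕ) (D : Fin n → Fin L × Fin L → ℕ)
    (hbound : ∀ u c, D u c ≤ θ) (h : ℕ) (hh : 2 ≤ h) :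
    Nat.card {H : Fin L × Fin L → Fin n → Fin n → ℕ //
        IsMultigraph L n D H ∧ NoShortCycle n (colorBlind L n H) h}
      * ∏ c : Fin L × Fin L, ∏ u, Nat.factorial (D u c)
      = Nat.card {σ : Config L n D //
          NoShortCycle n (colorBlind L n (Gamma L n D σ)) h} := by
  classical
  haveI hfin : Finite {H : Fin L × Fin L → Fin n → Fin n → ℕ //
      IsMultigraph L n D H ∧ NoShortCycle n (colorBlind L n H) h} := by
    apply Finite.of_injective (f := fun H => (fun c (i j : Fin n) =>
      (⟨H.1 c i j, by
        have h1 : H.1 c i j ≤ ∑ j', H.1 c i j' :=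
          Finset.single_le_sum (f := fun j' => H.1 c i j')
            (fun _ _ => Nat.zero_le _) (Finset.mem_univ j)
        have h2 := H.2.1.2.2.2 i c
        have h3 := hbound i c
        omega⟩ : Fin (θ + 1)) : Fin L × Fin L → Fin n → Fin n → Fin (θ + 1)))
    intro H H' hHH
    apply Subtype.ext
    funext c i j
    exact congrArg Fin.val (congrFun (congrFun (congrFun hHH c) i) j)
  haveI := Fintype.ofFinite {H : Fin L × Fin L → Fin n → Fin n → ℕ //
      IsMultigraph L n D H ∧ NoShortCycle n (colorBlind L n H) h}
  set Φ : {σ : Config L n D // NoShortCycle n (colorBlind L n (Gamma L n D σ)) h} →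
      {H : Fin L × Fin L → Fin n → Fin n → ℕ //
        IsMultigraph L n D H ∧ NoShortCycle n (colorBlind L n H) h} :=
    fun σ => ⟨Gamma L n D σ.1, gamma_isMultigraph L n D σ.1, σ.2⟩ with hΦ
  have E2 : ∀ HH : {H : Fin L × Fin L → Fin n → Fin n → ℕ //
        IsMultigraph L n D H ∧ NoShortCycle n (colorBlind L n H) h},
      {σ' : {σ : Config L n D // NoShortCycle n (colorBlind L n (Gamma L n D σ)) h} //
          Φ σ' = HH}
        ≃ {σ : Config L n D // Gamma L n D σ = HH.1} := by
    intro HH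
    refine ⟨fun σ' => ⟨σ'.1.1, congrArg Subtype.val σ'.2⟩,
      fun τ => ⟨⟨τ.1, ?_⟩, Subtype.ext τ.2⟩, fun σ' => Subtype.ext (Subtype.ext rfl),
      fun τ => Subtype.ext rfl⟩
    rw [show Gamma L n D τ.1 = HH.1 from τ.2]
    exact HH.2.2
  have hstep : Nat.card {σ : Config L n D //
      NoShortCycle n (colorBlind L n (Gamma L n D σ)) h}
      = ∑ HH : {H : Fin L × Fin L → Fin n → Fin n → ℕ //
          IsMultigraph L n D H ∧ NoShortCycle n (colorBlind L n H) h},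
        Nat.card {σ : Config L n D // Gamma L n D σ = HH.1} := by
    rw [Nat.card_congr (Equiv.sigmaFiberEquiv Φ).symm, nat_card_sigma]
    exact Finset.sum_congr rfl (fun HH _ => Nat.card_congr (E2 HH))
  rw [hstep]
  have hfib : ∀ HH : {H : Fin L × Fin L → Fin n → Fin n → ℕ //
      IsMultigraph L n D H ∧ NoShortCycle n (colorBlind L n H) h},
      Nat.card {σ : Config L n D // Gamma L n D σ = HH.1}
        = ∏ c : Fin L × Fin L, ∏ u, Nat.factorial (D u c) := by
    intro HH
    obtain ⟨hsim1, hsim2⟩ := simple_of_noShortCycle L n D HH.1 HH.2.1 h hh HH.2.2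
    exact card_fiber L n D HH.1 HH.2.1 hsim1 hsim2
  rw [Finset.sum_congr rfl (fun HH _ => hfib HH), Finset.sum_const, Finset.card_univ,
    smul_eq_mul, Nat.card_eq_fintype_card]


end Main

open Filter

/-- Under the hypotheses of Statement 4 (entries of `D⁽ⁿ⁾` bounded by
`θ` and empirical measures converging weakly to `P`), for `h ≥ 2`, if the probability
that the configuration model on `D⁽ⁿ⁾` produces no cycle of length `≤ h` converges to
`α_h > 0`, then
`|G(D⁽ⁿ⁾,h)| ~ α_h · (∏_{c∈C_<} S_c⁽ⁿ⁾! ∏_{c∈C_=} (S_c⁽ⁿ⁾−1)!!) / ∏_c ∏_u D_c⁽ⁿ⁾(u)!`,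
i.e. the ratio converges to `α_h`. -/
theorem stmt_5 (θ L : ℕ) (hL : 1 ≤ L)
    (P : ((Fin L × Fin L) → Fin (θ + 1)) → ℝ)
    (hP0 : ∀ M, 0 ≤ P M)
    (hP1 : ∑ M : (Fin L × Fin L) → Fin (θ + 1), P M = 1)
    (D : ∀ n : ℕ, Fin n → Fin L × Fin L → ℕ)
    (hbound : ∀ n u c, D n u c ≤ θ)
    (hadm1 : ∀ n, ∀ c : Fin L × Fin L, ∑ u, D n u c = ∑ u, D n u c.swap)
    (hadm2 : ∀ n, ∀ k : Fin L, Even (∑ u, D n u (k, k)))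
    (hconv : ∀ M : (Fin L × Fin L) → Fin (θ + 1),
      Tendsto (fun n : ℕ =>
          (Nat.card {u : Fin n // ∀ c, D n u c = (M c : ℕ)} : ℝ) / n)
        atTop (nhds (P M)))
    (h : ℕ) (hh : 2 ≤ h) (α : ℝ) (hα : 0 < α)
    (hlim : Tendsto (fun n : ℕ =>
        (Nat.card {σ : Config L n (D n) //
            NoShortCycle n (colorBlind L n (Gamma L n (D n) σ)) h} : ℝ) /
          (Nat.card (Config L n (D n)) : ℝ))
      atTop (nhds α)) :
    Tendsto (fun n : ℕ =>
        (Nat.card {H : Fin L × Fin L → Fin n → Fin n → ℕ //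
            IsMultigraph L n (D n) H ∧ NoShortCycle n (colorBlind L n H) h} : ℝ) *
          (∏ c : Fin L × Fin L, ∏ u, (Nat.factorial (D n u c) : ℝ)) /
          ((∏ c ∈ Finset.univ.filter (fun c : Fin L × Fin L => c.1 < c.2),
              (Nat.factorial (∑ u, D n u c) : ℝ)) *
            ∏ k : Fin L, (Nat.doubleFactorial (∑ u, D n u (k, k) - 1) : ℝ)))
      atTop (nhds α) := by
  refine Tendsto.congr (fun n => ?_) hlim
  have hK : (∏ c : Fin L × Fin L, ∏ u, (Nat.factorial (D n u c) : ℝ))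
      = ((∏ c : Fin L × Fin L, ∏ u, Nat.factorial (D n u c) : ℕ) : ℝ) := by
    push_cast
    rfl
  have hC : ((∏ c ∈ Finset.univ.filter (fun c : Fin L × Fin L => c.1 < c.2),
        (Nat.factorial (∑ u, D n u c) : ℝ)) *
      ∏ k : Fin L, (Nat.doubleFactorial (∑ u, D n u (k, k) - 1) : ℝ))
      = ((Nat.card (Config L n (D n)) : ℕ) : ℝ) := by
    rw [card_config L n (D n) (hadm1 n) (hadm2 n)]
    push_cast
    rfl
  rw [hK, hC, ← Nat.cast_mul,
    key_count θ L n (D n) (fun u c => hbound n u c) h hh]
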